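/- Fix n ≥ 1 and let θ(t) be the Riemann–Siegel theta function satisfying θ(t) = (t/2)·ln(t/(2π)) − t/2 − π/8 + O(1/t). Then for T ≥ 2, U ∈ (0, T^{1/2}], x ∈ [0, U], and P = T/(2π), the phase satisfies 2θ(T + x) − (T + x)·ln n = x·ln(P/n) + 2πP·ln(P/n) − 2πP − π/4 + O((1 + U + U³)/T), with an implied constant independent of n, T, U, x. -/

import Mathlib

open Real

set_option maxHeartbeats 1000000

theorem phase_expansion (θ : ℝ → ℝ) (C₀ : ℝ)
    (hθ : ∀ t ≥ (2:ℝ),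
      |θ t - ((t / 2) * Real.log (t / (2 * π)) - t / 2 - π / 8)| ≤ C₀ / t) :
    ∃ C > (0:ℝ), ∀ n : ℕ, 1 ≤ n → ∀ T ≥ (2:ℝ), ∀ U : ℝ, 0 < U → U ≤ T ^ ((1:ℝ)/2) →
      ∀ x ∈ Set.Icc (0:ℝ) U,
        |2 * θ (T + x) - (T + x) * Real.log n -
          (x * Real.log (T / (2 * π) / n) + 2 * π * (T / (2 * π)) * Real.log (T / (2 * π) / n)
            - 2 * π * (T / (2 * π)) - π / 4)|
          ≤ C * (1 + U + U ^ 3) / T := by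
  have hC₀ : 0 ≤ C₀ := by
    have h := hθ 2 le_rfl
    have h0 : (0:ℝ) ≤ C₀ / 2 := le_trans (abs_nonneg _) h
    linarith
  refine ⟨2 * C₀ + 2, by linarith, ?_⟩
  intro n hn T hT U hU hUT x hx
  obtain ⟨hx0, hxU⟩ := hx
  have hTpos : (0:ℝ) < T := by linarith
  have hπ : (0:ℝ) < π := Real.pi_pos
  have hnpos : (0:ℝ) < (n:ℝ) := by exact_mod_cast Nat.lt_of_lt_of_le Nat.zero_lt_one hn
  have hTx : (0:ℝ) < T + x := by linarith
  have he := hθ (T + x) (by linarith)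
  set e := θ (T + x) - ((T + x) / 2 * Real.log ((T + x) / (2 * π)) - (T + x) / 2 - π / 8)
    with he_def
  have hθeq : θ (T + x)
      = (T + x) / 2 * Real.log ((T + x) / (2 * π)) - (T + x) / 2 - π / 8 + e := by
    rw [he_def]; ring
  have hsq : T ^ ((1:ℝ)/2) ≤ T := by
    calc T ^ ((1:ℝ)/2) ≤ T ^ (1:ℝ) := by
          apply Real.rpow_le_rpow_of_exponent_le (by linarith)
          norm_num
      _ = T := Real.rpow_one T
  have hUleT : U ≤ T := le_trans hUT hsq
  have hxT : x ≤ T := le_trans hxU hUleT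
  -- log rewrites
  have h1 : Real.log ((T + x) / (2 * π)) = Real.log (T + x) - Real.log (2 * π) :=
    Real.log_div (ne_of_gt hTx) (by positivity)
  have h2 : Real.log (T / (2 * π) / n)
      = Real.log T - Real.log (2 * π) - Real.log n := by
    rw [Real.log_div (by positivity) (ne_of_gt hnpos),
        Real.log_div (ne_of_gt hTpos) (by positivity)]
  have h3 : 2 * π * (T / (2 * π)) = T := by field_simp
  have key : 2 * θ (T + x) - (T + x) * Real.log n -
      (x * Real.log (T / (2 * π) / n) + 2 * π * (T / (2 * π)) * Real.log (T / (2 * π) / n)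
        - 2 * π * (T / (2 * π)) - π / 4)
      = (T + x) * (Real.log (T + x) - Real.log T) - x + 2 * e := by
    rw [hθeq, h1, h2, h3]; ring
  rw [key]
  set L := Real.log (T + x) - Real.log T with hL_def
  -- upper bound on L
  have hub : L ≤ x / T := by
    have h := Real.log_le_sub_one_of_pos (show (0:ℝ) < (T + x) / T by positivity)
    rw [Real.log_div (ne_of_gt hTx) (ne_of_gt hTpos)] at h
    have hh : (T + x) / T - 1 = x / T := by field_simp; ring
    rw [hh] at h; exact h
  -- lower bound on L
  have hlb : x / T - (x / T) ^ 2 ≤ L := by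
    have h := Real.log_le_sub_one_of_pos (show (0:ℝ) < T / (T + x) by positivity)
    rw [Real.log_div (ne_of_gt hTpos) (ne_of_gt hTx)] at h
    have h4 : 1 - T / (T + x) ≤ L := by rw [hL_def]; linarith
    have h5 : x / T - (x / T) ^ 2 ≤ 1 - T / (T + x) := by
      have hh : 1 - T / (T + x) = x / (T + x) := by field_simp; ring
      rw [hh]
      have hh2 : x / T - (x / T) ^ 2 = (x * T - x ^ 2) / T ^ 2 := by
        field_simp
      rw [hh2, div_le_div_iff₀ (by positivity) hTx]
      nlinarith [pow_nonneg hx0 3]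
    linarith
  -- bound the main term
  have hmain : |(T + x) * L - x| ≤ U ^ 2 / T := by
    rw [abs_le]
    constructor
    · have hm : (T + x) * (x / T - (x / T) ^ 2) ≤ (T + x) * L :=
        mul_le_mul_of_nonneg_left hlb (le_of_lt hTx)
      have hid : (T + x) * (x / T - (x / T) ^ 2) - x = -(x ^ 3 / T ^ 2) := by
        field_simp; ring
      have hd : x ^ 3 / T ^ 2 ≤ U ^ 2 / T := by
        rw [div_le_div_iff₀ (by positivity) hTpos]
        have hx3 : x ^ 3 ≤ U ^ 3 := pow_le_pow_left₀ hx0 hxU 3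
        have hU3 : U ^ 3 ≤ U ^ 2 * T := by
          have := mul_le_mul_of_nonneg_left hUleT (sq_nonneg U)
          calc U ^ 3 = U ^ 2 * U := by ring
            _ ≤ U ^ 2 * T := this
        calc x ^ 3 * T ≤ U ^ 3 * T := mul_le_mul_of_nonneg_right hx3 hTpos.le
          _ ≤ (U ^ 2 * T) * T := mul_le_mul_of_nonneg_right hU3 hTpos.le
          _ = U ^ 2 * T ^ 2 := by ring
      linarith
    · have hm : (T + x) * L ≤ (T + x) * (x / T) :=
        mul_le_mul_of_nonneg_left hub (le_of_lt hTx)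
      have hid : (T + x) * (x / T) - x = x ^ 2 / T := by field_simp; ring
      have hd : x ^ 2 / T ≤ U ^ 2 / T := by gcongr
      linarith
  -- bound e
  have he2 : |e| ≤ C₀ / T := by
    refine le_trans he ?_
    gcongr
    linarith
  have habs : |(T + x) * L - x + 2 * e| ≤ U ^ 2 / T + 2 * (C₀ / T) := by
    calc |(T + x) * L - x + 2 * e| ≤ |(T + x) * L - x| + |2 * e| := abs_add_le _ _
      _ ≤ U ^ 2 / T + 2 * (C₀ / T) := by
          rw [abs_mul, abs_two]
          have := abs_nonneg e
          nlinarith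
  refine le_trans habs ?_
  have hnum : U ^ 2 ≤ 1 + U ^ 3 := by
    nlinarith [sq_nonneg (U - 1), mul_nonneg (sq_nonneg (U - 1)) hU.le]
  calc U ^ 2 / T + 2 * (C₀ / T) = (U ^ 2 + 2 * C₀) / T := by ring
    _ ≤ (2 * C₀ + 2) * (1 + U + U ^ 3) / T := by
        gcongr
        nlinarith [mul_nonneg hC₀ (by positivity : (0:ℝ) ≤ U + U ^ 3)]
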